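/- For all N ≥ 2 and 0 < k < N, the clique covering number of the Johnson graph satisfies θ(J(N,k)) ≤ binom(N−2, k−1). -/

import Mathlib

set_option maxHeartbeats 1000000

open Finset

section JohnsonAux

variable {α : Type*} [Fintype α] [LinearOrder α] [DecidableEq α]

/-- The complement of the two special elements. -/
def Rset (x y : α) : Finset α := Finset.univ \ {x, y}

/-- The labelling map whose fibers form a clique cover of the Johnson graph. -/
def ff (x y z : α) (S : Finset α) : Finset α :=
  if x ∈ S ∧ y ∈ S then
    (if z ∈ S \ {x, y} then
      (if h : (Rset x y \ (S \ {x, y})).Nonempty then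
        insert ((Rset x y \ (S \ {x, y})).min' h) (S \ {x, y})
      else ∅)
     else insert z (S \ {x, y}))
  else if x ∈ S ∨ y ∈ S then S \ {x, y}
  else if z ∈ S then S.erase z
  else if h : S.Nonempty then S.erase (S.min' h) else ∅

lemma ff_main (x y z : α) (hxy : x ≠ y) (hzx : z ≠ x) (hzy : z ≠ y)
    (S : Finset α) (k : ℕ) (hS : S.card = k) (hk : 2 ≤ k) (hN : k < Fintype.card α) :
    ff x y z S ⊆ Rset x y ∧ (ff x y z S).card = k - 1 ∧
    ((∃ w, w ∉ ff x y z S ∧ S = insert w (ff x y z S) ∧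
        (w = x ∨ w = y ∨ z ∉ ff x y z S))
     ∨ (x ∈ S ∧ y ∈ S ∧ z ∈ ff x y z S ∧ S \ {x, y} ⊆ ff x y z S ∧
        (S \ {x, y}).card = k - 2)) := by
  have hz : z ∈ Rset x y := by simp [Rset, hzx, hzy]
  unfold ff
  split_ifs with h1 h2 h3 h4 h5 h6
  · -- both, z ∈ A, nonempty
    set A := S \ {x, y} with hA
    have hsub : {x, y} ⊆ S := by
      intro a ha; simp only [mem_insert, mem_singleton] at ha
      rcases ha with rfl | rfl; exacts [h1.1, h1.2]
    have hAcard : A.card = k - 2 := by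
      rw [hA, card_sdiff_of_subset hsub, card_pair hxy, hS]
    have hAR : A ⊆ Rset x y := by
      intro a ha; simp only [hA, mem_sdiff] at ha; simp [Rset, ha.2]
    set g := (Rset x y \ A).min' h3 with hg
    have hgmem : g ∈ Rset x y \ A := min'_mem _ _
    rw [mem_sdiff] at hgmem
    refine ⟨?_, ?_, Or.inr ⟨h1.1, h1.2, ?_, subset_insert _ _, hAcard⟩⟩
    · exact insert_subset hgmem.1 hAR
    · rw [card_insert_of_notMem hgmem.2, hAcard]; omega
    · exact mem_insert_of_mem h2
  · -- both, z ∈ A, empty (impossible)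
    exfalso
    apply h3
    have hsub : {x, y} ⊆ S := by
      intro a ha; simp only [mem_insert, mem_singleton] at ha
      rcases ha with rfl | rfl; exacts [h1.1, h1.2]
    have hAcard : (S \ {x, y}).card = k - 2 := by
      rw [card_sdiff_of_subset hsub, card_pair hxy, hS]
    have hAR : S \ {x, y} ⊆ Rset x y := by
      intro a ha; simp only [mem_sdiff] at ha; simp [Rset, ha.2]
    have hR : (Rset x y).card = Fintype.card α - 2 := by
      rw [Rset, card_sdiff_of_subset (subset_univ _), card_pair hxy, card_univ]
    rw [← card_pos, card_sdiff_of_subset hAR, hR, hAcard]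
    omega
  · -- both, z ∉ A
    set A := S \ {x, y} with hA
    have hsub : {x, y} ⊆ S := by
      intro a ha; simp only [mem_insert, mem_singleton] at ha
      rcases ha with rfl | rfl; exacts [h1.1, h1.2]
    have hAcard : A.card = k - 2 := by
      rw [hA, card_sdiff_of_subset hsub, card_pair hxy, hS]
    have hAR : A ⊆ Rset x y := by
      intro a ha; simp only [hA, mem_sdiff] at ha; simp [Rset, ha.2]
    refine ⟨insert_subset hz hAR, ?_, Or.inr ⟨h1.1, h1.2, mem_insert_self _ _,
      subset_insert _ _, hAcard⟩⟩
    rw [card_insert_of_notMem h2, hAcard]; omega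
  · -- exactly one of x, y
    rcases h4 with hx | hy
    · have hy' : y ∉ S := fun hy => h1 ⟨hx, hy⟩
      have he : S \ {x, y} = S.erase x := by
        ext a
        simp only [mem_sdiff, mem_erase, mem_insert, mem_singleton]
        constructor
        · rintro ⟨ha, h⟩; exact ⟨fun hh => h (Or.inl hh), ha⟩
        · rintro ⟨h, ha⟩
          refine ⟨ha, ?_⟩
          rintro (rfl | rfl)
          · exact h rfl
          · exact hy' ha
      refine ⟨?_, ?_, Or.inl ⟨x, ?_, ?_, Or.inl rfl⟩⟩
      · intro a ha; simp only [mem_sdiff] at ha; simp [Rset, ha.2]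
      · rw [he, card_erase_of_mem hx, hS]
      · simp
      · rw [he, insert_erase hx]
    · have hx' : x ∉ S := fun hx => h1 ⟨hx, hy⟩
      have he : S \ {x, y} = S.erase y := by
        ext a
        simp only [mem_sdiff, mem_erase, mem_insert, mem_singleton]
        constructor
        · rintro ⟨ha, h⟩; exact ⟨fun hh => h (Or.inr hh), ha⟩
        · rintro ⟨h, ha⟩
          refine ⟨ha, ?_⟩
          rintro (rfl | rfl)
          · exact hx' ha
          · exact h rfl
      refine ⟨?_, ?_, Or.inl ⟨y, ?_, ?_, Or.inr (Or.inl rfl)⟩⟩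
      · intro a ha; simp only [mem_sdiff] at ha; simp [Rset, ha.2]
      · rw [he, card_erase_of_mem hy, hS]
      · simp
      · rw [he, insert_erase hy]
  · -- neither, z ∈ S
    have hx' : x ∉ S := fun hx => h4 (Or.inl hx)
    have hy' : y ∉ S := fun hy => h4 (Or.inr hy)
    refine ⟨?_, ?_, Or.inl ⟨z, notMem_erase _ _, (insert_erase h5).symm,
      Or.inr (Or.inr (notMem_erase _ _))⟩⟩
    · intro a ha
      have := mem_of_mem_erase ha
      simp only [Rset, mem_sdiff, mem_univ, true_and, mem_insert, mem_singleton]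
      rintro (rfl | rfl); exacts [hx' this, hy' this]
    · rw [card_erase_of_mem h5, hS]
  · -- neither, z ∉ S
    have hx' : x ∉ S := fun hx => h4 (Or.inl hx)
    have hy' : y ∉ S := fun hy => h4 (Or.inr hy)
    have hm := min'_mem S h6
    refine ⟨?_, ?_, Or.inl ⟨S.min' h6, notMem_erase _ _, (insert_erase hm).symm,
      Or.inr (Or.inr fun hzz => h5 (mem_of_mem_erase hzz))⟩⟩
    · intro a ha
      have := mem_of_mem_erase ha
      simp only [Rset, mem_sdiff, mem_univ, true_and, mem_insert, mem_singleton]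
      rintro (rfl | rfl); exacts [hx' this, hy' this]
    · rw [card_erase_of_mem hm, hS]
  · -- neither, z ∉ S, S empty : impossible
    exfalso; apply h6; rw [← card_pos, hS]; omega

/-- Mixed case of the clique property. -/
lemma ff_inter_mixed (x y z : α) (hxy : x ≠ y) (hzx : z ≠ x) (hzy : z ≠ y)
    (S T : Finset α) (k : ℕ) (hS : S.card = k) (hT : T.card = k) (hk : 2 ≤ k)
    (hN : k < Fintype.card α) (hf : ff x y z S = ff x y z T)
    (hPS : ∃ w, w ∉ ff x y z S ∧ S = insert w (ff x y z S) ∧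
        (w = x ∨ w = y ∨ z ∉ ff x y z S))
    (hPT : x ∈ T ∧ y ∈ T ∧ z ∈ ff x y z T ∧ T \ {x, y} ⊆ ff x y z T ∧
        (T \ {x, y}).card = k - 2) :
    (S ∩ T).card = k - 1 := by
  obtain ⟨w, hwB, hSw, hw⟩ := hPS
  obtain ⟨hxT, hyT, hzB, hAB, hAcard⟩ := hPT
  set B := ff x y z S with hB
  rw [← hf] at hzB hAB
  have hBR : B ⊆ Rset x y := (ff_main x y z hxy hzx hzy S k hS hk hN).1
  set A := T \ {x, y} with hA
  have hwxy : w = x ∨ w = y := by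
    rcases hw with rfl | rfl | hzB'
    · exact Or.inl rfl
    · exact Or.inr rfl
    · exact absurd hzB hzB'
  have hwT : w ∈ T := by rcases hwxy with rfl | rfl; exacts [hxT, hyT]
  have hwA : w ∉ A := by
    simp only [hA, mem_sdiff, mem_insert, mem_singleton]
    rcases hwxy with rfl | rfl
    · rintro ⟨-, h⟩; exact h (Or.inl rfl)
    · rintro ⟨-, h⟩; exact h (Or.inr rfl)
  have hST : S ∩ T = insert w A := by
    ext a
    simp only [mem_inter, mem_insert]
    constructor
    · rintro ⟨haS, haT⟩
      rw [hSw, mem_insert] at haS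
      rcases haS with rfl | haB
      · exact Or.inl rfl
      · right
        have haR := hBR haB
        simp only [Rset, mem_sdiff, mem_univ, true_and, mem_insert,
          mem_singleton] at haR
        simp only [hA, mem_sdiff, mem_insert, mem_singleton]
        exact ⟨haT, haR⟩
    · rintro (rfl | haA)
      · exact ⟨by rw [hSw]; exact mem_insert_self _ _, hwT⟩
      · refine ⟨?_, (sdiff_subset) haA⟩
        rw [hSw]
        exact mem_insert_of_mem (hAB haA)
  rw [hST, card_insert_of_notMem hwA, hAcard]
  omega

/-- The fibers of `ff` are cliques. -/
lemma ff_inter (x y z : α) (hxy : x ≠ y) (hzx : z ≠ x) (hzy : z ≠ y)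
    (S T : Finset α) (k : ℕ) (hS : S.card = k) (hT : T.card = k) (hk : 2 ≤ k)
    (hN : k < Fintype.card α) (hne : S ≠ T) (hf : ff x y z S = ff x y z T) :
    (S ∩ T).card = k - 1 := by
  obtain ⟨hBR, hBcard, hPS⟩ := ff_main x y z hxy hzx hzy S k hS hk hN
  obtain ⟨-, -, hPT⟩ := ff_main x y z hxy hzx hzy T k hT hk hN
  rcases hPS with hPS | hPS
  · rcases hPT with hPT | hPT
    · -- both type P1
      obtain ⟨w, hwB, hSw, -⟩ := hPS
      obtain ⟨w', hwB', hTw, -⟩ := hPT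
      rw [← hf] at hwB' hTw
      have hww : w ≠ w' := by
        rintro rfl
        exact hne (hSw.trans hTw.symm)
      have hST : S ∩ T = ff x y z S := by
        ext a
        simp only [mem_inter]
        constructor
        · rintro ⟨haS, haT⟩
          rw [hSw, mem_insert] at haS
          rcases haS with rfl | haB
          · rw [hTw, mem_insert] at haT
            rcases haT with rfl | haB'
            · exact absurd rfl hww
            · exact absurd haB' hwB
          · exact haB
        · intro haB
          exact ⟨by rw [hSw]; exact mem_insert_of_mem haB,
            by rw [hTw]; exact mem_insert_of_mem haB⟩
      rw [hST, hBcard]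
    · exact ff_inter_mixed x y z hxy hzx hzy S T k hS hT hk hN hf hPS hPT
  · rcases hPT with hPT | hPT
    · rw [inter_comm]
      exact ff_inter_mixed x y z hxy hzx hzy T S k hT hS hk hN hf.symm hPT hPS
    · -- both type P2
      obtain ⟨hxS, hyS, -, hAB, hAcard⟩ := hPS
      obtain ⟨hxT, hyT, -, hAB', hAcard'⟩ := hPT
      set B := ff x y z S with hB
      rw [← hf] at hAB'
      set A := S \ {x, y} with hA
      set A' := T \ {x, y} with hA'
      have hsubS : {x, y} ⊆ S := by
        intro a ha; simp only [mem_insert, mem_singleton] at ha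
        rcases ha with rfl | rfl; exacts [hxS, hyS]
      have hsubT : {x, y} ⊆ T := by
        intro a ha; simp only [mem_insert, mem_singleton] at ha
        rcases ha with rfl | rfl; exacts [hxT, hyT]
      have hSA : A ∪ {x, y} = S := sdiff_union_of_subset hsubS
      have hTA : A' ∪ {x, y} = T := sdiff_union_of_subset hsubT
      have hAA : A ≠ A' := by
        intro h
        apply hne
        rw [← hSA, ← hTA, h]
      have hBcard : B.card = k - 1 := (ff_main x y z hxy hzx hzy S k hS hk hN).2.1
      have hUB : A ∪ A' ⊆ B := union_subset hAB hAB'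
      have hUcard : (A ∪ A').card = k - 1 := by
        have h1 : (A ∪ A').card ≤ k - 1 := hBcard ▸ card_le_card hUB
        have h2 : A.card ≤ (A ∪ A').card := card_le_card subset_union_left
        rcases eq_or_lt_of_le h2 with heq | hlt
        · exfalso
          have := (eq_of_subset_of_card_le subset_union_left (le_of_eq heq.symm))
          have hA'A : A' ⊆ A := this ▸ subset_union_right
          exact hAA (eq_of_subset_of_card_le hA'A (by rw [hAcard, hAcard'])).symm
        · rw [hAcard] at hlt; omega
      have hIcard : (A ∩ A').card = k - 3 := by
        have := card_union_add_card_inter A A'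
        rw [hUcard, hAcard, hAcard'] at this
        omega
      have hk3 : 3 ≤ k := by
        have := card_union_add_card_inter A A'
        rw [hUcard, hAcard, hAcard'] at this
        omega
      have hST : S ∩ T = (A ∩ A') ∪ {x, y} := by
        rw [← hSA, ← hTA]
        ext a
        simp only [mem_inter, mem_union, mem_insert, mem_singleton]
        constructor
        · rintro ⟨hS1 | hS1, hT1 | hT1⟩
          · exact Or.inl ⟨hS1, hT1⟩
          · exact Or.inr hT1
          · exact Or.inr hS1
          · exact Or.inr hS1
        · rintro (⟨h1, h2⟩ | h1)
          · exact ⟨Or.inl h1, Or.inl h2⟩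
          · exact ⟨Or.inr h1, Or.inr h1⟩
      have hdisj : Disjoint (A ∩ A') {x, y} := by
        rw [disjoint_left]
        intro a ha hxy'
        have := (mem_of_mem_inter_left ha)
        simp only [hA, mem_sdiff] at this
        exact this.2 hxy'
      rw [hST, card_union_of_disjoint hdisj, hIcard, card_pair hxy]
      omega

end JohnsonAux

/-- The Johnson graph `J(N, k)`. -/
def johnson (N k : ℕ) : SimpleGraph {S : Finset (Fin N) // S.card = k} where
  Adj S T := S ≠ T ∧ (S.1 ∩ T.1).card = k - 1
  symm := by
    constructor
    intro S T h
    exact ⟨h.1.symm, by rw [Finset.inter_comm]; exact h.2⟩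
  loopless := by
    constructor
    intro S h
    exact h.1 rfl

/-- The (vertex) clique covering number of a graph. -/
noncomputable def theta {V : Type*} (G : SimpleGraph V) : ℕ :=
  sInf {n | ∃ 𝒞 : Finset (Set V), 𝒞.card = n ∧ (∀ C ∈ 𝒞, G.IsClique C) ∧
    ∀ v, ∃ C ∈ 𝒞, v ∈ C}

/-- For all `N ≥ 2` and `0 < k < N`, `θ(J(N, k)) ≤ binom(N-2, k-1)`. -/
theorem theta_johnson_le_choose (N k : ℕ) (hN : 2 ≤ N) (hk : 0 < k) (hkN : k < N) :
    theta (johnson N k) ≤ (N - 2).choose (k - 1) := by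
  classical
  rcases Nat.lt_or_ge k 2 with hk1 | hk2
  · -- k = 1 : the graph is complete
    have hk1 : k = 1 := by omega
    subst hk1
    have hmem : 1 ∈ {n | ∃ 𝒞 : Finset (Set {S : Finset (Fin N) // S.card = 1}),
        𝒞.card = n ∧ (∀ C ∈ 𝒞, (johnson N 1).IsClique C) ∧ ∀ v, ∃ C ∈ 𝒞, v ∈ C} := by
      refine ⟨{Set.univ}, Finset.card_singleton _, ?_, ?_⟩
      · intro C hC
        rw [Finset.mem_singleton] at hC
        subst hC
        intro a _ b _ hab
        refine ⟨hab, ?_⟩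
        obtain ⟨u, hu⟩ := Finset.card_eq_one.mp a.2
        obtain ⟨v, hv⟩ := Finset.card_eq_one.mp b.2
        have huv : u ≠ v := by
          rintro rfl
          exact hab (Subtype.ext (hu.trans hv.symm))
        rw [hu, hv, Finset.singleton_inter_of_notMem (by simpa using huv)]
        simp
      · intro v
        exact ⟨Set.univ, Finset.mem_singleton_self _, Set.mem_univ _⟩
    calc theta (johnson N 1) ≤ 1 := Nat.sInf_le hmem
      _ ≤ (N - 2).choose 0 := by simp
  · -- k ≥ 2
    have hN3 : 3 ≤ N := by omega
    set x : Fin N := ⟨N - 1, by omega⟩ with hxdef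
    set y : Fin N := ⟨N - 2, by omega⟩ with hydef
    set z : Fin N := ⟨0, by omega⟩ with hzdef
    have hxy : x ≠ y := by simp [hxdef, hydef, Fin.ext_iff]; omega
    have hzx : z ≠ x := by simp [hzdef, hxdef, Fin.ext_iff]; omega
    have hzy : z ≠ y := by simp [hzdef, hydef, Fin.ext_iff]; omega
    have hcard : k < Fintype.card (Fin N) := by simpa using hkN
    set V := {S : Finset (Fin N) // S.card = k}
    set PB := (Rset x y).powersetCard (k - 1) with hPB
    set 𝒞 : Finset (Set V) := PB.image (fun B => {v : V | ff x y z v.1 = B}) with h𝒞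
    have hmem : 𝒞.card ∈ {n | ∃ 𝒟 : Finset (Set V),
        𝒟.card = n ∧ (∀ C ∈ 𝒟, (johnson N k).IsClique C) ∧ ∀ v, ∃ C ∈ 𝒟, v ∈ C} := by
      refine ⟨𝒞, rfl, ?_, ?_⟩
      · intro C hC
        rw [h𝒞, Finset.mem_image] at hC
        obtain ⟨B, hB, rfl⟩ := hC
        intro a ha b hb hab
        have ha' : ff x y z a.1 = B := ha
        have hb' : ff x y z b.1 = B := hb
        refine ⟨hab, ?_⟩
        exact ff_inter x y z hxy hzx hzy a.1 b.1 k a.2 b.2 hk2 hcard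
          (fun h => hab (Subtype.ext h)) (ha'.trans hb'.symm)
      · intro v
        refine ⟨{w : V | ff x y z w.1 = ff x y z v.1}, ?_, rfl⟩
        rw [h𝒞, Finset.mem_image]
        refine ⟨ff x y z v.1, ?_, rfl⟩
        rw [hPB, Finset.mem_powersetCard]
        obtain ⟨h1, h2, -⟩ := ff_main x y z hxy hzx hzy v.1 k v.2 hk2 hcard
        exact ⟨h1, h2⟩
    have hRcard : (Rset x y).card = N - 2 := by
      rw [Rset, Finset.card_sdiff_of_subset (Finset.subset_univ _), Finset.card_pair hxy,
        Finset.card_univ, Fintype.card_fin]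
    calc theta (johnson N k) ≤ 𝒞.card := Nat.sInf_le hmem
      _ ≤ PB.card := Finset.card_image_le
      _ = (N - 2).choose (k - 1) := by
          rw [hPB, Finset.card_powersetCard, hRcard]
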